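/- On the interior of the triangular region T₁ = {(α,r)∈[0,1]²: (α/r)D > D*}, the function F(α,r) = αS^in + (1-α)·λ(((1-α)/(1-r))D) satisfies F_r > 0, hence F restricted to T₁ has no interior critical points and its extrema lie on the boundary of T₁. -/

import Mathlib

/-- On the interior of T₁ = {(α,r)∈[0,1]² : (α/r)D > D*}, the function
F(α,r) = α·S^in + (1-α)·λ(((1-α)/(1-r))·D) satisfies F_r > 0, hence F has no
interior critical point in T₁. -/
theorem stmt_6 (lam : ℝ → ℝ) (D Dstar Sin : ℝ) (F : ℝ → ℝ → ℝ) (T1 : Set (ℝ × ℝ))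
    (hD : 0 < D) (hDDstar : D < Dstar)
    (hlamdiff : ∀ x ∈ Set.Ico (0:ℝ) Dstar, DifferentiableAt ℝ lam x)
    (hlam' : ∀ x ∈ Set.Ico (0:ℝ) Dstar, 0 < deriv lam x)
    (hT1 : T1 = {p : ℝ × ℝ | p ∈ (Set.Icc (0:ℝ) 1) ×ˢ (Set.Icc (0:ℝ) 1) ∧
          Dstar < (p.1 / p.2) * D})
    (hF : ∀ α r : ℝ, F α r = α * Sin + (1 - α) * lam (((1 - α) / (1 - r)) * D)) :
    ∀ p : ℝ × ℝ, p ∈ interior T1 →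
      0 < deriv (fun ρ => F p.1 ρ) p.2 ∧ ¬ deriv (fun ρ => F p.1 ρ) p.2 = 0 := by
  intro p hp
  obtain ⟨ε, hε, hball⟩ := Metric.mem_nhds_iff.mp (mem_interior_iff_mem_nhds.mp hp)
  have hpT : p ∈ T1 := interior_subset hp
  set α := p.1 with hα
  set r := p.2 with hr
  rw [hT1] at hpT
  obtain ⟨⟨⟨hα0, hα1⟩, ⟨hr0, hr1⟩⟩, hDs⟩ := hpT
  -- r > 0
  have hrpos : 0 < r := by
    rcases lt_or_eq_of_le hr0 with h | h
    · exact h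
    · exfalso
      rw [← h] at hDs
      simp at hDs
      linarith
  -- α < 1 via interior
  have hα1' : α < 1 := by
    have hq : (α + ε/2, r) ∈ T1 := by
      apply hball
      simp [Metric.mem_ball, Prod.dist_eq, Real.dist_eq, abs_of_pos hε]
      rw [← hα, ← hr]
      refine ⟨?_, ?_⟩ <;> simp [abs_of_pos (half_pos hε)] <;> linarith
    rw [hT1] at hq
    have := hq.1.1.2
    simp at this
    linarith
  -- r < 1 via interior
  have hr1' : r < 1 := by
    have hq : (α, r + ε/2) ∈ T1 := by
      apply hball
      simp [Metric.mem_ball, Prod.dist_eq, Real.dist_eq, abs_of_pos hε]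
      rw [← hα, ← hr]
      refine ⟨?_, ?_⟩ <;> simp [abs_of_pos (half_pos hε)] <;> linarith
    rw [hT1] at hq
    have := hq.1.2.2
    simp at this
    linarith
  have h1r : 0 < 1 - r := by linarith
  have h1α : 0 < 1 - α := by linarith
  set x := ((1 - α) / (1 - r)) * D with hxdef
  have hDsr : Dstar * r < α * D := by
    have : Dstar < α * D / r := by
      rw [← div_mul_eq_mul_div]; exact hDs
    exact (lt_div_iff₀ hrpos).mp this
  have hx : x ∈ Set.Ico (0:ℝ) Dstar := by
    constructor
    · positivity
    · rw [hxdef, div_mul_eq_mul_div, div_lt_iff₀ h1r]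
      nlinarith
  have hlamd := (hlamdiff x hx).hasDerivAt
  have h1 : HasDerivAt (fun ρ : ℝ => 1 - ρ) (-1) r := (hasDerivAt_id r).const_sub 1
  have h2 := h1.inv (ne_of_gt h1r)
  have h3 := (h2.const_mul (1 - α)).mul_const D
  have hg : HasDerivAt (fun ρ : ℝ => ((1 - α) / (1 - ρ)) * D)
      ((1 - α) * (-(-1) / (1 - r) ^ 2) * D) r := by
    simpa only [div_eq_mul_inv, Pi.inv_apply] using h3
  have hcomp := hlamd.comp r hg
  have hF' : HasDerivAt (fun ρ => F α ρ)
      ((1 - α) * (deriv lam x * ((1 - α) * (-(-1) / (1 - r) ^ 2) * D))) r := by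
    have : (fun ρ => F α ρ) = fun ρ => α * Sin + (1 - α) * lam (((1 - α) / (1 - ρ)) * D) := by
      funext ρ; exact hF α ρ
    rw [this]
    exact (hcomp.const_mul (1 - α)).const_add (α * Sin)
  rw [hF'.deriv]
  have hpos : 0 < (1 - α) * (deriv lam x * ((1 - α) * (-(-1) / (1 - r) ^ 2) * D)) := by
    have := hlam' x hx
    have h4 : (0:ℝ) < -(-1) / (1 - r) ^ 2 := by positivity
    positivity
  exact ⟨hpos, ne_of_gt hpos⟩
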